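/- (Constructive form of Theorem 6.) Let P be a positive integer and suppose Σ_{j=1}^n α_j x_j ≥ α₀ is valid for Π with α_j ∈ {0,1,…,P} for all j and α₀ ≤ P. Suppose for some integer k ≥ 2 we have Σ_{h∈δ(k)} α_h ≥ P − 1, and let i attain the minimum of w_j over {j : α_j = k}. Define α'_j = α_j for j ≠ i and α'_i = k − 1. Then Σ_{j=1}^n α'_j x_j ≥ α₀ is valid for Π. -/

import Mathlib

open Finset

/-- The inequality Σ α_j x_j ≥ α₀ (α ∈ ℕ^n) is valid for the minimum-knapsack set
Π = {x ∈ {0,1}^n : Σ w_j x_j ≥ w₀}. -/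
def knapValid (n : ℕ) (w : Fin n → ℕ) (w0 : ℕ) (α : Fin n → ℕ) (α0 : ℕ) : Prop :=
  ∀ x : Fin n → ℝ, (∀ j, x j = 0 ∨ x j = 1) →
    (w0 : ℝ) ≤ ∑ j, (w j : ℝ) * x j → (α0 : ℝ) ≤ ∑ j, (α j : ℝ) * x j

/-- The drag δ(k) of a value k for the inequality with coefficients α:
δ(k) = {h : w_h ≥ min{w_j : α_j = k} and 0 < α_h < k} (empty when no j has α_j = k).
The condition w_h ≥ min{w_j : α_j = k} is expressed as ∃ j, α_j = k ∧ w_j ≤ w_h. -/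
def dragSet (n : ℕ) (w : Fin n → ℕ) (α : Fin n → ℕ) (k : ℕ) : Finset (Fin n) :=
  Finset.univ.filter (fun h => (∃ j, α j = k ∧ w j ≤ w h) ∧ 0 < α h ∧ α h < k)

/-- constructive form of Theorem 6: if Σ α_j x_j ≥ α₀ is valid for Π
with coefficients in {0,…,P}, α₀ ≤ P, and for some k ≥ 2 we have
Σ_{h∈δ(k)} α_h ≥ P − 1, then lowering the coefficient of a w-minimal index i with
α_i = k from k to k−1 keeps the inequality valid for Π. -/
theorem stmt_10 (n : ℕ) (hn : 0 < n) (w : Fin n → ℕ) (w0 : ℕ)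
    (hw : ∀ j, w j ≤ w0) (P : ℕ) (hP : 0 < P)
    (α : Fin n → ℕ) (α0 : ℕ) (hαP : ∀ j, α j ≤ P) (hα0 : α0 ≤ P)
    (hvalid : knapValid n w w0 α α0)
    (k : ℕ) (hk : 2 ≤ k)
    (hdrag : (P : ℤ) - 1 ≤ ∑ h ∈ dragSet n w α k, (α h : ℤ))
    (i : Fin n) (hik : α i = k) (himin : ∀ j, α j = k → w i ≤ w j) :
    knapValid n w w0 (fun j => if j = i then k - 1 else α j) α0 := by
  classical
  -- validity in terms of finsets
  have natValid : ∀ T : Finset (Fin n), w0 ≤ ∑ j ∈ T, w j → α0 ≤ ∑ j ∈ T, α j := by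
    intro T hT
    have conv : ∀ c : Fin n → ℕ,
        ∑ j, (c j : ℝ) * (if j ∈ T then (1:ℝ) else 0) = ((∑ j ∈ T, c j : ℕ) : ℝ) := by
      intro c
      rw [Nat.cast_sum]
      rw [← Finset.sum_filter_add_sum_filter_not Finset.univ (fun j => j ∈ T)]
      have h1 : ∀ j ∈ Finset.univ.filter (fun j => j ∈ T),
          (c j : ℝ) * (if j ∈ T then (1:ℝ) else 0) = (c j : ℝ) := by
        intro j hj; rw [Finset.mem_filter] at hj; simp [hj.2]
      have h2 : ∀ j ∈ Finset.univ.filter (fun j => ¬ j ∈ T),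
          (c j : ℝ) * (if j ∈ T then (1:ℝ) else 0) = 0 := by
        intro j hj; rw [Finset.mem_filter] at hj; simp [hj.2]
      rw [Finset.sum_congr rfl h1, Finset.sum_congr rfl h2, Finset.sum_const_zero, add_zero]
      congr 1
      ext j; simp
    have h := hvalid (fun j => if j ∈ T then 1 else 0)
      (fun j => by by_cases hj : j ∈ T <;> simp [hj])
      (by rw [conv w]; exact_mod_cast hT)
    rw [conv α] at h
    exact_mod_cast h
  intro x hx hxw
  set S : Finset (Fin n) := Finset.univ.filter (fun j => x j = 1) with hS
  have key : ∀ c : Fin n → ℕ, ∑ j, (c j : ℝ) * x j = ((∑ j ∈ S, c j : ℕ) : ℝ) := by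
    intro c
    rw [Nat.cast_sum, hS]
    rw [Finset.sum_filter]
    refine Finset.sum_congr rfl (fun j _ => ?_)
    rcases hx j with h1 | h1 <;> simp [h1]
  have hSw : w0 ≤ ∑ j ∈ S, w j := by
    rw [key w] at hxw; exact_mod_cast hxw
  rw [key (fun j => if j = i then k - 1 else α j)]
  have main : α0 ≤ ∑ j ∈ S, (if j = i then k - 1 else α j) := by
    by_cases hiS : i ∈ S
    · -- split off i
      have hsplit : ∀ c : Fin n → ℕ, ∑ j ∈ S, c j = c i + ∑ j ∈ S.erase i, c j :=
        fun c => (Finset.add_sum_erase S c hiS).symm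
      have herase : ∀ j ∈ S.erase i, (if j = i then k - 1 else α j) = α j := by
        intro j hj; rw [if_neg (Finset.ne_of_mem_erase hj)]
      rw [hsplit, if_pos rfl, Finset.sum_congr rfl herase]
      by_cases hsub : dragSet n w α k ⊆ S.erase i
      · -- all drag elements chosen
        have hD : P ≤ (∑ h ∈ dragSet n w α k, α h) + 1 := by
          have : ((∑ h ∈ dragSet n w α k, α h : ℕ) : ℤ) = ∑ h ∈ dragSet n w α k, (α h : ℤ) :=
            Nat.cast_sum _ _
          omega
        have hle : ∑ h ∈ dragSet n w α k, α h ≤ ∑ j ∈ S.erase i, α j :=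
          Finset.sum_le_sum_of_subset hsub
        have hk1 : 1 ≤ k - 1 := by omega
        calc α0 ≤ P := hα0
          _ ≤ (∑ h ∈ dragSet n w α k, α h) + 1 := hD
          _ ≤ (∑ j ∈ S.erase i, α j) + 1 := add_le_add_left hle 1
          _ = 1 + ∑ j ∈ S.erase i, α j := by ring
          _ ≤ (k - 1) + ∑ j ∈ S.erase i, α j := add_le_add_left hk1 _
      · -- some drag element h missing; swap i for h
        rw [Finset.subset_iff] at hsub
        push_neg at hsub
        obtain ⟨h, hhdrag, hhS⟩ := hsub
        have hmem := hhdrag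
        rw [dragSet, Finset.mem_filter] at hmem
        obtain ⟨-, ⟨j, hjk, hjh⟩, hh0, hhk⟩ := hmem
        have hwih : w i ≤ w h := le_trans (himin j hjk) hjh
        have hT := natValid (insert h (S.erase i)) ?_
        · rw [Finset.sum_insert hhS] at hT
          have hhk1 : α h ≤ k - 1 := by omega
          calc α0 ≤ α h + ∑ j ∈ S.erase i, α j := hT
            _ ≤ (k - 1) + ∑ j ∈ S.erase i, α j := add_le_add_left hhk1 _
        · rw [Finset.sum_insert hhS]
          have hws : ∑ j ∈ S, w j = w i + ∑ j ∈ S.erase i, w j :=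
            (Finset.add_sum_erase S w hiS).symm
          calc w0 ≤ ∑ j ∈ S, w j := hSw
            _ = w i + ∑ j ∈ S.erase i, w j := hws
            _ ≤ w h + ∑ j ∈ S.erase i, w j := add_le_add_left hwih _
    · have : ∀ j ∈ S, (if j = i then k - 1 else α j) = α j := by
        intro j hj
        rw [if_neg]; rintro rfl; exact hiS hj
      rw [Finset.sum_congr rfl this]
      exact natValid S hSw
  exact_mod_cast main
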